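/- (Convergence in probability for triangular arrays.) For each n ≥ 1, let G_0^n ⊆ G_1^n ⊆ ⋯ ⊆ G_n^n be sub-σ-algebras of a probability space (Ω, F, P), and let ζ_k^n (1 ≤ k ≤ n) be square-integrable real random variables with ζ_k^n G_k^n-measurable. Let U be a real random variable. If (i) ∑_{k=1}^n E[ζ_k^n | G_{k−1}^n] → U in probability as n → ∞, and (ii) ∑_{k=1}^n E[(ζ_k^n)² | G_{k−1}^n] → 0 in probability as n → ∞, then ∑_{k=1}^n ζ_k^n → U in probability as n → ∞. -/

import Mathlib

open MeasureTheory Filter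

noncomputable section

namespace TriangularAux

variable {Ω : Type*} [m0 : MeasurableSpace Ω]


variable {Ω : Type*} [m0 : MeasurableSpace Ω]

lemma memL2_condexp (P : Measure Ω) [IsProbabilityMeasure P] {m : MeasurableSpace Ω}
    (hm : m ≤ m0) {f : Ω → ℝ} (hf : MemLp f 2 P) :
    MemLp (P[f|m]) 2 P := by
  obtain ⟨g, hfg⟩ : ∃ g : Ω →₂[P] ℝ, f =ᵐ[P] g := ⟨hf.toLp f, (MemLp.coeFn_toLp hf).symm⟩
  have h : (condExpL2 ℝ ℝ hm g : Ω → ℝ) =ᵐ[P] P[f|m] := by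
    refine ae_eq_condExp_of_forall_setIntegral_eq hm (hf.integrable one_le_two)
      (fun s hs hμs => integrableOn_condExpL2_of_measure_ne_top hm hμs.ne _)
      (fun s hs hμs => ?_) (aestronglyMeasurable_condExpL2 hm _)
    rw [integral_condExpL2_eq hm g hs hμs.ne]
    exact integral_congr_ae (ae_restrict_of_ae hfg.symm)
  exact MemLp.ae_eq h (Lp.memLp _)

lemma integrable_mul_L2 (P : Measure Ω) [IsProbabilityMeasure P] {f g : Ω → ℝ}
    (hf : MemLp f 2 P) (hg : MemLp g 2 P) :
    Integrable (fun ω => f ω * g ω) P := by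
  have h : MemLp (g • f) 1 P := MemLp.smul (r := 1) hf hg
  have h2 : Integrable (g • f) P := h.integrable le_rfl
  exact h2.congr (Eventually.of_forall fun ω => by simp [mul_comm])

lemma row_bound (P : Measure Ω) [IsProbabilityMeasure P]
    (N : ℕ) (m : ℕ → MeasurableSpace Ω) (hle : ∀ k, m k ≤ m0)
    (hmono : ∀ k k', k ≤ k' → k' ≤ N → m k ≤ m k')
    (ζ : ℕ → Ω → ℝ)
    (hL2 : ∀ k, 1 ≤ k → k ≤ N → MemLp (ζ k) 2 P)
    (hmeas : ∀ k, 1 ≤ k → k ≤ N → Measurable[m k] (ζ k))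
    {δ ε : ℝ} (hδ : 0 < δ) (hε : 0 < ε) :
    P {ω | δ ≤ |∑ k ∈ Finset.Icc 1 N, (ζ k ω - (P[ζ k | m (k-1)]) ω)|}
      ≤ P {ω | ε ≤ |∑ k ∈ Finset.Icc 1 N, (P[fun ω' => (ζ k ω') ^ 2 | m (k-1)]) ω|}
        + ENNReal.ofReal (ε / δ ^ 2) := by
  classical
  set φ : ℕ → Ω → ℝ := fun k => P[ζ k | m (k-1)] with hφdef
  set ψ : ℕ → Ω → ℝ := fun k => P[fun ω' => (ζ k ω') ^ 2 | m (k-1)] with hψdef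
  set B : ℕ → Ω → ℝ := fun k ω => ∑ j ∈ Finset.Icc 1 k, ψ j ω with hBdef
  set X : ℕ → Ω → ℝ := fun k ω => ζ k ω - φ k ω with hXdef
  set χ : ℕ → Ω → ℝ := fun k ω => if B k ω ≤ ε then 1 else 0 with hχdef
  set Y : ℕ → Ω → ℝ := fun k ω => χ k ω * X k ω with hYdef
  set M : Ω → ℝ := fun ω => ∑ k ∈ Finset.Icc 1 N, Y k ω with hMdef
  -- basic facts
  have hψnn : ∀ k, 0 ≤ᵐ[P] ψ k := fun k =>
    condExp_nonneg (Eventually.of_forall fun ω => sq_nonneg _)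
  have hψint : ∀ k, Integrable (ψ k) P := fun k => integrable_condExp
  have hφint : ∀ k, Integrable (φ k) P := fun k => integrable_condExp
  have hφL2 : ∀ k, 1 ≤ k → k ≤ N → MemLp (φ k) 2 P :=
    fun k h1 h2 => memL2_condexp P (hle _) (hL2 k h1 h2)
  have hXL2 : ∀ k, 1 ≤ k → k ≤ N → MemLp (X k) 2 P :=
    fun k h1 h2 => (hL2 k h1 h2).sub (hφL2 k h1 h2)
  have hφsm : ∀ k, StronglyMeasurable[m (k-1)] (φ k) := fun k => stronglyMeasurable_condExp
  have hψsm : ∀ k, StronglyMeasurable[m (k-1)] (ψ k) := fun k => stronglyMeasurable_condExp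
  have hBmeas : ∀ k, 1 ≤ k → k ≤ N → Measurable[m (k-1)] (B k) := by
    intro k h1 h2
    refine Finset.measurable_sum _ fun j hj => ?_
    simp only [Finset.mem_Icc] at hj
    exact ((hψsm j).mono (hmono (j-1) (k-1) (by omega) (by omega))).measurable
  have hχmeas : ∀ k, 1 ≤ k → k ≤ N → Measurable[m (k-1)] (χ k) := by
    intro k h1 h2
    exact Measurable.ite (measurableSet_le (hBmeas k h1 h2) measurable_const)
      measurable_const measurable_const
  have hχnn : ∀ k ω, 0 ≤ χ k ω := by
    intro k ω; simp only [hχdef]; split <;> norm_num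
  have hχle1 : ∀ k ω, χ k ω ≤ 1 := by
    intro k ω; simp only [hχdef]; split <;> norm_num
  have hYL2 : ∀ k, 1 ≤ k → k ≤ N → MemLp (Y k) 2 P := by
    intro k h1 h2
    refine MemLp.of_le (hXL2 k h1 h2) ?_ (Eventually.of_forall fun ω => ?_)
    · exact (((hχmeas k h1 h2).mono (hle _) le_rfl).aestronglyMeasurable.mul
        (hXL2 k h1 h2).aestronglyMeasurable)
    · simp only [hYdef, norm_mul, Real.norm_eq_abs]
      calc |χ k ω| * |X k ω| ≤ 1 * |X k ω| := by
            refine mul_le_mul_of_nonneg_right ?_ (abs_nonneg _)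
            rw [abs_of_nonneg (hχnn k ω)]; exact hχle1 k ω
        _ = |X k ω| := one_mul _
  have hYint : ∀ k, 1 ≤ k → k ≤ N → Integrable (Y k) P :=
    fun k h1 h2 => (hYL2 k h1 h2).integrable one_le_two
  -- martingale difference property
  have hXcond : ∀ k, 1 ≤ k → k ≤ N → P[X k | m (k-1)] =ᵐ[P] 0 := by
    intro k h1 h2
    have hsub : P[X k | m (k-1)] =ᵐ[P] P[ζ k | m (k-1)] - P[φ k | m (k-1)] :=
      condExp_sub ((hL2 k h1 h2).integrable one_le_two) (hφint k) _
    have heq : P[φ k | m (k-1)] = φ k :=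
      condExp_of_stronglyMeasurable (hle _) (hφsm k) (hφint k)
    refine hsub.trans ?_
    rw [heq]
    filter_upwards with ω
    simp [hφdef]
  have hYcond : ∀ k, 1 ≤ k → k ≤ N → P[Y k | m (k-1)] =ᵐ[P] 0 := by
    intro k h1 h2
    have hpull : P[χ k * X k | m (k-1)] =ᵐ[P] χ k * P[X k | m (k-1)] :=
      condExp_mul_of_stronglyMeasurable_left ((hχmeas k h1 h2).stronglyMeasurable)
        (hYint k h1 h2) ((hXL2 k h1 h2).integrable one_le_two)
    have hYeq : Y k = χ k * X k := rfl
    rw [hYeq]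
    refine hpull.trans ?_
    filter_upwards [hXcond k h1 h2] with ω hω
    simp only [Pi.mul_apply, hω, Pi.zero_apply, mul_zero]
  -- orthogonality of the truncated differences
  have horth : ∀ j k, 1 ≤ j → j < k → k ≤ N → ∫ ω, Y j ω * Y k ω ∂P = 0 := by
    intro j k hj hjk hkN
    have hjN : j ≤ N := by omega
    have hk1 : 1 ≤ k := by omega
    have hYj_sm : StronglyMeasurable[m (k-1)] (Y j) := by
      have h1 : StronglyMeasurable[m (k-1)] (χ j) :=
        ((hχmeas j hj hjN).mono (hmono (j-1) (k-1) (by omega) (by omega)) le_rfl).stronglyMeasurable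
      have h2 : StronglyMeasurable[m (k-1)] (ζ j) :=
        ((hmeas j hj hjN).mono (hmono j (k-1) (by omega) (by omega)) le_rfl).stronglyMeasurable
      have h3 : StronglyMeasurable[m (k-1)] (φ j) :=
        (hφsm j).mono (hmono (j-1) (k-1) (by omega) (by omega))
      exact h1.mul (h2.sub h3)
    have hint : Integrable (fun ω => Y j ω * Y k ω) P :=
      integrable_mul_L2 P (hYL2 j hj hjN) (hYL2 k hk1 hkN)
    have hpull : P[Y j * Y k | m (k-1)] =ᵐ[P] Y j * P[Y k | m (k-1)] :=
      condExp_mul_of_stronglyMeasurable_left hYj_sm hint (hYint k hk1 hkN)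
    have hz : P[Y j * Y k | m (k-1)] =ᵐ[P] 0 := by
      refine hpull.trans ?_
      filter_upwards [hYcond k hk1 hkN] with ω h1
      simp only [Pi.mul_apply, h1, Pi.zero_apply, mul_zero]
    have hci := integral_condExp (μ := P) (f := Y j * Y k) (hle (k-1))
    calc ∫ ω, Y j ω * Y k ω ∂P = ∫ ω, (P[Y j * Y k | m (k-1)]) ω ∂P := hci.symm
      _ = ∫ ω, (0 : Ω → ℝ) ω ∂P := integral_congr_ae hz
      _ = 0 := by simp
  -- conditional second moment bound : P[X k ^ 2 | m (k-1)] ≤ ψ k a.e.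
  have hX2cond : ∀ k, 1 ≤ k → k ≤ N →
      P[fun ω => X k ω ^ 2 | m (k-1)] ≤ᵐ[P] ψ k := by
    intro k h1 h2
    have hζint : Integrable (ζ k) P := (hL2 k h1 h2).integrable one_le_two
    have hζsq : Integrable (fun ω => ζ k ω ^ 2) P := (hL2 k h1 h2).integrable_sq
    have hφsq : Integrable (fun ω => φ k ω ^ 2) P := (hφL2 k h1 h2).integrable_sq
    have h2φζ : Integrable (fun ω => (2 * φ k ω) * ζ k ω) P :=
      integrable_mul_L2 P ((hφL2 k h1 h2).const_mul 2) (hL2 k h1 h2)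
    have hXsq_eq : (fun ω => X k ω ^ 2)
        = (fun ω => ζ k ω ^ 2) - (fun ω => 2 * φ k ω * ζ k ω - φ k ω ^ 2) := by
      funext ω
      simp only [hXdef, Pi.sub_apply]
      ring
    have hst1 : P[fun ω => X k ω ^ 2 | m (k-1)]
        =ᵐ[P] P[fun ω => ζ k ω ^ 2 | m (k-1)] - P[fun ω => 2 * φ k ω * ζ k ω - φ k ω ^ 2 | m (k-1)] := by
      rw [hXsq_eq]
      exact condExp_sub hζsq (h2φζ.sub hφsq) _
    have hst2 : P[fun ω => 2 * φ k ω * ζ k ω - φ k ω ^ 2 | m (k-1)]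
        =ᵐ[P] P[fun ω => 2 * φ k ω * ζ k ω | m (k-1)] - P[fun ω => φ k ω ^ 2 | m (k-1)] :=
      condExp_sub h2φζ hφsq _
    have hsm2φ : StronglyMeasurable[m (k-1)] (fun ω => 2 * φ k ω) :=
      stronglyMeasurable_const.mul (hφsm k)
    have hpull : P[(fun ω => 2 * φ k ω) * ζ k | m (k-1)]
        =ᵐ[P] (fun ω => 2 * φ k ω) * P[ζ k | m (k-1)] :=
      condExp_mul_of_stronglyMeasurable_left hsm2φ h2φζ hζint
    have hφsq_eq : P[fun ω => φ k ω ^ 2 | m (k-1)] = fun ω => φ k ω ^ 2 :=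
      condExp_of_stronglyMeasurable (hle _) ((hφsm k).pow 2) hφsq
    filter_upwards [hst1, hst2, hpull, hψnn k] with ω e1 e2 e3 e4
    have e5 : (P[fun ω => 2 * φ k ω * ζ k ω | m (k-1)]) ω = 2 * φ k ω * φ k ω := by
      have : (P[(fun ω => 2 * φ k ω) * ζ k | m (k-1)]) ω
          = ((fun ω => 2 * φ k ω) * P[ζ k | m (k-1)]) ω := e3
      exact this
    have : (P[fun ω => X k ω ^ 2 | m (k-1)]) ω = ψ k ω - (2 * φ k ω * φ k ω - φ k ω ^ 2) := by
      rw [e1]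
      simp only [Pi.sub_apply]
      rw [e2]
      simp only [Pi.sub_apply, e5, hφsq_eq, hψdef]
    rw [this]
    nlinarith [sq_nonneg (φ k ω)]
  -- integrability of χ k * ψ k
  have hχψ_int : ∀ k, 1 ≤ k → k ≤ N → Integrable (fun ω => χ k ω * ψ k ω) P := by
    intro k h1 h2
    refine Integrable.mono' (hψint k).abs ?_ (Eventually.of_forall fun ω => ?_)
    · exact ((hχmeas k h1 h2).mono (hle _) le_rfl).aestronglyMeasurable.mul
        (hψint k).aestronglyMeasurable
    · simp only [Real.norm_eq_abs, abs_mul]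
      calc |χ k ω| * |ψ k ω| ≤ 1 * |ψ k ω| := by
            refine mul_le_mul_of_nonneg_right ?_ (abs_nonneg _)
            rw [abs_of_nonneg (hχnn k ω)]; exact hχle1 k ω
        _ = |ψ k ω| := one_mul _
  -- key inequality : E[Y k ^ 2] ≤ E[χ k * ψ k]
  have hkey : ∀ k, 1 ≤ k → k ≤ N →
      ∫ ω, Y k ω ^ 2 ∂P ≤ ∫ ω, χ k ω * ψ k ω ∂P := by
    intro k h1 h2
    have hXsq : Integrable (fun ω => X k ω ^ 2) P := (hXL2 k h1 h2).integrable_sq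
    have hχsm : StronglyMeasurable[m (k-1)] (χ k) := (hχmeas k h1 h2).stronglyMeasurable
    have hint : Integrable (χ k * fun ω => X k ω ^ 2) P := by
      refine Integrable.mono' hXsq.abs ?_ (Eventually.of_forall fun ω => ?_)
      · exact ((hχmeas k h1 h2).mono (hle _) le_rfl).aestronglyMeasurable.mul
          hXsq.aestronglyMeasurable
      · simp only [Pi.mul_apply, Real.norm_eq_abs, abs_mul]
        calc |χ k ω| * |X k ω ^ 2| ≤ 1 * |X k ω ^ 2| := by
              refine mul_le_mul_of_nonneg_right ?_ (abs_nonneg _)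
              rw [abs_of_nonneg (hχnn k ω)]; exact hχle1 k ω
          _ = |X k ω ^ 2| := one_mul _
    have hYsq_eq : (fun ω => Y k ω ^ 2) = χ k * fun ω => X k ω ^ 2 := by
      funext ω
      simp only [hYdef, Pi.mul_apply, hχdef]
      split <;> ring
    have hpull : P[χ k * fun ω => X k ω ^ 2 | m (k-1)]
        =ᵐ[P] χ k * P[fun ω => X k ω ^ 2 | m (k-1)] :=
      condExp_mul_of_stronglyMeasurable_left hχsm hint hXsq
    have hci := integral_condExp (μ := P) (f := χ k * fun ω => X k ω ^ 2) (hle (k-1))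
    calc ∫ ω, Y k ω ^ 2 ∂P = ∫ ω, (χ k * fun ω => X k ω ^ 2) ω ∂P := by rw [hYsq_eq]
      _ = ∫ ω, (P[χ k * fun ω => X k ω ^ 2 | m (k-1)]) ω ∂P := hci.symm
      _ = ∫ ω, (χ k * P[fun ω => X k ω ^ 2 | m (k-1)]) ω ∂P := integral_congr_ae hpull
      _ ≤ ∫ ω, χ k ω * ψ k ω ∂P := by
          refine integral_mono_ae ?_ (hχψ_int k h1 h2) ?_
          · refine Integrable.mono'
              (integrable_condExp (f := fun ω => X k ω ^ 2) (m := m (k-1))).abs ?_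
              (Eventually.of_forall fun ω => ?_)
            · exact ((hχmeas k h1 h2).mono (hle _) le_rfl).aestronglyMeasurable.mul
                (stronglyMeasurable_condExp.mono (hle _)).aestronglyMeasurable
            · simp only [Pi.mul_apply, Real.norm_eq_abs, abs_mul]
              calc |χ k ω| * |(P[fun ω => X k ω ^ 2 | m (k-1)]) ω|
                  ≤ 1 * |(P[fun ω => X k ω ^ 2 | m (k-1)]) ω| := by
                    refine mul_le_mul_of_nonneg_right ?_ (abs_nonneg _)
                    rw [abs_of_nonneg (hχnn k ω)]; exact hχle1 k ω
                _ = _ := one_mul _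
          · filter_upwards [hX2cond k h1 h2] with ω hω
            exact mul_le_mul_of_nonneg_left hω (hχnn k ω)
  -- pointwise bound on the truncated quadratic variation
  have hsum_ae : ∀ᵐ ω ∂P, ∑ k ∈ Finset.Icc 1 N, χ k ω * ψ k ω ≤ ε := by
    filter_upwards [ae_all_iff.mpr hψnn] with ω hω
    have hrw : ∀ k, χ k ω * ψ k ω = if B k ω ≤ ε then ψ k ω else 0 := by
      intro k
      simp only [hχdef]
      split <;> simp
    simp only [hrw]
    rw [Finset.sum_ite, Finset.sum_const_zero, add_zero]
    set T := (Finset.Icc 1 N).filter fun k => B k ω ≤ ε with hT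
    rcases T.eq_empty_or_nonempty with h | h
    · rw [h]; simpa using hε.le
    · set K := T.max' h with hK
      have hKT : K ∈ T := T.max'_mem h
      have hKN : K ∈ Finset.Icc 1 N := (Finset.mem_filter.mp hKT).1
      have hKB : B K ω ≤ ε := (Finset.mem_filter.mp hKT).2
      have hsub : T ⊆ Finset.Icc 1 K := by
        intro k hk
        have h1 := Finset.mem_Icc.mp (Finset.mem_filter.mp hk).1
        exact Finset.mem_Icc.mpr ⟨h1.1, T.le_max' k hk⟩
      calc ∑ k ∈ T, ψ k ω ≤ ∑ k ∈ Finset.Icc 1 K, ψ k ω :=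
            Finset.sum_le_sum_of_subset_of_nonneg hsub fun j _ _ => hω j
        _ = B K ω := rfl
        _ ≤ ε := hKB
  -- second moment of the truncated sum
  have hML2 : MemLp M 2 P := by
    have : ∀ k ∈ Finset.Icc 1 N, MemLp (Y k) 2 P := by
      intro k hk
      have := Finset.mem_Icc.mp hk
      exact hYL2 k this.1 this.2
    have h2 := memLp_finset_sum' (Finset.Icc 1 N) this
    refine h2.ae_eq (Eventually.of_forall fun ω => ?_)
    simp [hMdef, Finset.sum_apply]
  have hMint_sq : Integrable (fun ω => M ω ^ 2) P := hML2.integrable_sq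
  have hYY_int : ∀ j k, 1 ≤ j → j ≤ N → 1 ≤ k → k ≤ N →
      Integrable (fun ω => Y j ω * Y k ω) P :=
    fun j k h1 h2 h3 h4 => integrable_mul_L2 P (hYL2 j h1 h2) (hYL2 k h3 h4)
  have hM2 : ∫ ω, M ω ^ 2 ∂P ≤ ε := by
    have hexp : ∫ ω, M ω ^ 2 ∂P
        = ∑ k ∈ Finset.Icc 1 N, ∑ j ∈ Finset.Icc 1 N, ∫ ω, Y k ω * Y j ω ∂P := by
      have h1 : (fun ω => M ω ^ 2)
          = fun ω => ∑ k ∈ Finset.Icc 1 N, ∑ j ∈ Finset.Icc 1 N, Y k ω * Y j ω := by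
        funext ω
        rw [hMdef]
        simp only [sq]
        rw [Finset.sum_mul_sum]
      rw [h1]
      rw [integral_finset_sum]
      · refine Finset.sum_congr rfl fun k hk => ?_
        have hk' := Finset.mem_Icc.mp hk
        rw [integral_finset_sum]
        intro j hj
        have hj' := Finset.mem_Icc.mp hj
        exact hYY_int k j hk'.1 hk'.2 hj'.1 hj'.2
      · intro k hk
        have hk' := Finset.mem_Icc.mp hk
        refine integrable_finset_sum _ fun j hj => ?_
        have hj' := Finset.mem_Icc.mp hj
        exact hYY_int k j hk'.1 hk'.2 hj'.1 hj'.2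
    have hdiag : ∀ k ∈ Finset.Icc 1 N,
        ∑ j ∈ Finset.Icc 1 N, ∫ ω, Y k ω * Y j ω ∂P = ∫ ω, Y k ω ^ 2 ∂P := by
      intro k hk
      have hk' := Finset.mem_Icc.mp hk
      rw [Finset.sum_eq_single_of_mem k hk]
      · simp only [sq]
      · intro j hj hjk
        have hj' := Finset.mem_Icc.mp hj
        rcases lt_or_gt_of_ne hjk with h | h
        · have := horth j k hj'.1 h hk'.2
          rw [← this]
          exact integral_congr_ae (Eventually.of_forall fun ω => mul_comm _ _)
        · exact horth k j hk'.1 h hj'.2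
    rw [hexp, Finset.sum_congr rfl hdiag]
    calc ∑ k ∈ Finset.Icc 1 N, ∫ ω, Y k ω ^ 2 ∂P
        ≤ ∑ k ∈ Finset.Icc 1 N, ∫ ω, χ k ω * ψ k ω ∂P := by
          refine Finset.sum_le_sum fun k hk => ?_
          have hk' := Finset.mem_Icc.mp hk
          exact hkey k hk'.1 hk'.2
      _ = ∫ ω, ∑ k ∈ Finset.Icc 1 N, χ k ω * ψ k ω ∂P := by
          rw [integral_finset_sum]
          intro k hk
          have hk' := Finset.mem_Icc.mp hk
          exact hχψ_int k hk'.1 hk'.2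
      _ ≤ ∫ _ω, ε ∂P := by
          refine integral_mono_ae ?_ (integrable_const _) hsum_ae
          refine integrable_finset_sum _ fun k hk => ?_
          have hk' := Finset.mem_Icc.mp hk
          exact hχψ_int k hk'.1 hk'.2
      _ = ε := by simp
  -- Chebyshev for M
  have hcheb : P {ω | δ ≤ |M ω|} ≤ ENNReal.ofReal (ε / δ ^ 2) := by
    have hset : {ω | δ ≤ |M ω|} = {ω | δ ^ 2 ≤ M ω ^ 2} := by
      ext ω
      simp only [Set.mem_setOf_eq]
      constructor
      · intro h
        calc δ ^ 2 ≤ |M ω| ^ 2 := pow_le_pow_left₀ hδ.le h 2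
          _ = M ω ^ 2 := sq_abs _
      · intro h
        have : δ ^ 2 ≤ |M ω| ^ 2 := by rwa [sq_abs]
        exact le_of_pow_le_pow_left₀ two_ne_zero (abs_nonneg _) this
    have hmarkov := mul_meas_ge_le_integral_of_nonneg
      (Eventually.of_forall fun ω => sq_nonneg (M ω)) hMint_sq (δ ^ 2)
    rw [hset]
    have hfin : P {ω | δ ^ 2 ≤ M ω ^ 2} ≠ ⊤ := measure_ne_top _ _
    rw [← ENNReal.ofReal_toReal hfin]
    refine ENNReal.ofReal_le_ofReal ?_
    rw [le_div_iff₀ (by positivity)]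
    calc (P {ω | δ ^ 2 ≤ M ω ^ 2}).toReal * δ ^ 2
        = δ ^ 2 * (P {ω | δ ^ 2 ≤ M ω ^ 2}).toReal := mul_comm _ _
      _ ≤ ∫ ω, M ω ^ 2 ∂P := hmarkov
      _ ≤ ε := hM2
  -- a.e. inclusion of events
  have hincl : ∀ᵐ ω ∂P, δ ≤ |∑ k ∈ Finset.Icc 1 N, (ζ k ω - (P[ζ k | m (k-1)]) ω)| →
      (ε ≤ |∑ k ∈ Finset.Icc 1 N, ψ k ω| ∨ δ ≤ |M ω|) := by
    filter_upwards [ae_all_iff.mpr hψnn] with ω hω h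
    by_cases hB : B N ω ≤ ε
    · right
      have hall : ∀ k ∈ Finset.Icc 1 N, χ k ω = 1 := by
        intro k hk
        have hk' := Finset.mem_Icc.mp hk
        have hsub : Finset.Icc 1 k ⊆ Finset.Icc 1 N := by
          intro j hj
          have := Finset.mem_Icc.mp hj
          exact Finset.mem_Icc.mpr ⟨this.1, this.2.trans hk'.2⟩
        have hBk : B k ω ≤ B N ω :=
          Finset.sum_le_sum_of_subset_of_nonneg hsub fun j _ _ => hω j
        simp only [hχdef]
        rw [if_pos (hBk.trans hB)]
      have hMeq : M ω = ∑ k ∈ Finset.Icc 1 N, (ζ k ω - (P[ζ k | m (k-1)]) ω) := by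
        refine Finset.sum_congr rfl fun k hk => ?_
        rw [hYdef]
        simp only
        rw [hall k hk, one_mul, hXdef]
      rwa [hMeq]
    · left
      have hBnn : 0 ≤ B N ω := Finset.sum_nonneg fun j _ => hω j
      have : ε ≤ B N ω := le_of_not_ge hB
      calc ε ≤ B N ω := this
        _ = |B N ω| := (abs_of_nonneg hBnn).symm
        _ = |∑ k ∈ Finset.Icc 1 N, ψ k ω| := rfl
  -- conclude
  have hmono_meas : P {ω | δ ≤ |∑ k ∈ Finset.Icc 1 N, (ζ k ω - (P[ζ k | m (k-1)]) ω)|}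
      ≤ P ({ω | ε ≤ |∑ k ∈ Finset.Icc 1 N, ψ k ω|} ∪ {ω | δ ≤ |M ω|}) := by
    refine measure_mono_ae ?_
    filter_upwards [hincl] with ω hω h
    exact hω h
  calc P {ω | δ ≤ |∑ k ∈ Finset.Icc 1 N, (ζ k ω - (P[ζ k | m (k-1)]) ω)|}
      ≤ P ({ω | ε ≤ |∑ k ∈ Finset.Icc 1 N, ψ k ω|} ∪ {ω | δ ≤ |M ω|}) := hmono_meas
    _ ≤ P {ω | ε ≤ |∑ k ∈ Finset.Icc 1 N, ψ k ω|} + P {ω | δ ≤ |M ω|} := measure_union_le _ _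
    _ ≤ P {ω | ε ≤ |∑ k ∈ Finset.Icc 1 N, ψ k ω|} + ENNReal.ofReal (ε / δ ^ 2) :=
        add_le_add le_rfl hcheb

end TriangularAux

open TriangularAux

/-- **Convergence in probability for triangular arrays** (Lemma of Genon-Catalot–Jacod type).
If the conditional expectations of the row sums converge in probability to `U` and the
conditional expectations of the squares sum to `0` in probability, then the row sums
`∑_{k=1}^n ζ_k^n` converge in probability to `U`. -/
theorem triangular_array_convergence_in_probability
    {Ω : Type*} [m0 : MeasurableSpace Ω] (P : Measure Ω) [IsProbabilityMeasure P]
    -- nested sub-σ-algebras `G_0^n ⊆ G_1^n ⊆ ⋯ ⊆ G_n^n`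
    (G : ℕ → ℕ → MeasurableSpace Ω)
    (hGle : ∀ n k, G n k ≤ m0)
    (hGmono : ∀ n, ∀ k k', k ≤ k' → k' ≤ n → G n k ≤ G n k')
    -- the triangular array: `ζ n k` is square integrable and `G n k`-measurable
    (ζ : ℕ → ℕ → Ω → ℝ)
    (hL2 : ∀ n k, 1 ≤ k → k ≤ n → MemLp (ζ n k) 2 P)
    (hmeas : ∀ n k, 1 ≤ k → k ≤ n → Measurable[G n k] (ζ n k))
    (U : Ω → ℝ)
    -- (i) the conditional means sum to `U` in probability
    (hcond_mean : TendstoInMeasure P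
      (fun n ω => ∑ k ∈ Finset.Icc 1 n, (P[ζ n k | G n (k - 1)]) ω) atTop U)
    -- (ii) the conditional second moments sum to `0` in probability
    (hcond_sq : TendstoInMeasure P
      (fun n ω => ∑ k ∈ Finset.Icc 1 n, (P[fun ω' => (ζ n k ω') ^ 2 | G n (k - 1)]) ω)
      atTop (fun _ => 0)) :
    TendstoInMeasure P (fun n ω => ∑ k ∈ Finset.Icc 1 n, ζ n k ω) atTop U := by
  rw [tendstoInMeasure_iff_dist] at hcond_mean hcond_sq ⊢
  intro δ hδ
  rw [ENNReal.tendsto_atTop_zero]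
  intro η hη
  obtain ⟨r, hr0, hrη⟩ : ∃ r : ℝ, 0 < r ∧ ENNReal.ofReal r ≤ η := by
    rcases eq_or_ne η ⊤ with h | h
    · exact ⟨1, one_pos, by simp [h]⟩
    · exact ⟨η.toReal, ENNReal.toReal_pos hη.ne' h, by rw [ENNReal.ofReal_toReal h]⟩
  set ε : ℝ := r * δ ^ 2 / 12 with hεdef
  have hε : 0 < ε := by positivity
  -- eventual bounds from hypotheses
  have h1 := (hcond_mean (δ / 2) (by positivity))
  have h2 := (hcond_sq ε hε)
  rw [ENNReal.tendsto_atTop_zero] at h1 h2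
  obtain ⟨n1, hn1⟩ := h1 (ENNReal.ofReal (r / 3)) (by simp [ENNReal.ofReal_pos]; positivity)
  obtain ⟨n2, hn2⟩ := h2 (ENNReal.ofReal (r / 3)) (by simp [ENNReal.ofReal_pos]; positivity)
  refine ⟨max n1 n2, fun n hn => ?_⟩
  have hn1' := hn1 n (le_of_max_le_left hn)
  have hn2' := hn2 n (le_of_max_le_right hn)
  -- row bound
  have hrow := row_bound P n (G n) (hGle n) (hGmono n) (ζ n) (hL2 n) (hmeas n)
    (half_pos hδ) hε
  -- inclusion of events
  have hsubset : {ω | δ ≤ dist (∑ k ∈ Finset.Icc 1 n, ζ n k ω) (U ω)}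
      ⊆ {ω | δ / 2 ≤ |∑ k ∈ Finset.Icc 1 n, (ζ n k ω - (P[ζ n k | G n (k-1)]) ω)|}
        ∪ {ω | δ / 2 ≤ dist (∑ k ∈ Finset.Icc 1 n, (P[ζ n k | G n (k-1)]) ω) (U ω)} := by
    intro ω hω
    simp only [Set.mem_setOf_eq, Real.dist_eq] at hω ⊢
    by_contra hcon
    simp only [Set.mem_union, Set.mem_setOf_eq, Real.dist_eq, not_or, not_le] at hcon
    obtain ⟨hc1, hc2⟩ := hcon
    have heq : ∑ k ∈ Finset.Icc 1 n, (ζ n k ω - (P[ζ n k | G n (k-1)]) ω)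
        = ∑ k ∈ Finset.Icc 1 n, ζ n k ω - ∑ k ∈ Finset.Icc 1 n, (P[ζ n k | G n (k-1)]) ω :=
      Finset.sum_sub_distrib _ _
    have htri : |∑ k ∈ Finset.Icc 1 n, ζ n k ω - U ω|
        ≤ |∑ k ∈ Finset.Icc 1 n, (ζ n k ω - (P[ζ n k | G n (k-1)]) ω)|
          + |∑ k ∈ Finset.Icc 1 n, (P[ζ n k | G n (k-1)]) ω - U ω| := by
      rw [heq]
      exact abs_sub_le _ _ _
    linarith
  -- the quadratic variation sets coincide
  have hBset : {ω | ε ≤ |∑ k ∈ Finset.Icc 1 n, (P[fun ω' => (ζ n k ω') ^ 2 | G n (k-1)]) ω|}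
      = {ω | ε ≤ dist (∑ k ∈ Finset.Icc 1 n, (P[fun ω' => (ζ n k ω') ^ 2 | G n (k-1)]) ω)
          ((fun _ => (0:ℝ)) ω)} := by
    ext ω
    simp [Real.dist_eq]
  calc P {ω | δ ≤ dist (∑ k ∈ Finset.Icc 1 n, ζ n k ω) (U ω)}
      ≤ P ({ω | δ / 2 ≤ |∑ k ∈ Finset.Icc 1 n, (ζ n k ω - (P[ζ n k | G n (k-1)]) ω)|}
        ∪ {ω | δ / 2 ≤ dist (∑ k ∈ Finset.Icc 1 n, (P[ζ n k | G n (k-1)]) ω) (U ω)}) :=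
        measure_mono hsubset
    _ ≤ P {ω | δ / 2 ≤ |∑ k ∈ Finset.Icc 1 n, (ζ n k ω - (P[ζ n k | G n (k-1)]) ω)|}
        + P {ω | δ / 2 ≤ dist (∑ k ∈ Finset.Icc 1 n, (P[ζ n k | G n (k-1)]) ω) (U ω)} :=
        measure_union_le _ _
    _ ≤ (P {ω | ε ≤ |∑ k ∈ Finset.Icc 1 n, (P[fun ω' => (ζ n k ω') ^ 2 | G n (k-1)]) ω|}
        + ENNReal.ofReal (ε / (δ / 2) ^ 2)) + ENNReal.ofReal (r / 3) :=
        add_le_add hrow hn1'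
    _ ≤ (ENNReal.ofReal (r / 3) + ENNReal.ofReal (r / 3)) + ENNReal.ofReal (r / 3) := by
        refine add_le_add (add_le_add ?_ ?_) le_rfl
        · rw [hBset]; exact hn2'
        · refine ENNReal.ofReal_le_ofReal ?_
          rw [hεdef]
          rw [div_le_div_iff₀ (by positivity) (by norm_num)]
          ring_nf
          nlinarith [sq_nonneg δ, hδ]
    _ = ENNReal.ofReal (r / 3 + r / 3 + r / 3) := by
        rw [ENNReal.ofReal_add (by positivity) (by positivity),
          ENNReal.ofReal_add (by positivity) (by positivity)]
    _ = ENNReal.ofReal r := by ring_nf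
    _ ≤ η := hrη

end
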